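/- Let M̂ and M̃ be n×n real matrices with M̂ ≤ M̃ entrywise, and let q̂, q̃ ∈ ℝⁿ with q̂ ≤ q̃ entrywise. Suppose z̃ solves LCP(M̃, q̃) and ẑ solves LCP(M̂, q̂). Assume q̃ = −M̃ z̃ and that there exists an index i₀ with q̂_{i₀} < q̃_{i₀}. If M̃ is invertible with all entries of M̃⁻¹ positive, or M̂ is invertible with all entries of M̂⁻¹ positive, then z̃ < ẑ entrywise. -/
import Mathlib


/-- `z` solves the linear complementarity problem LCP(M, q). -/
def SolvesLCP {n : ℕ} (M : Matrix (Fin n) (Fin n) ℝ) (q z : Fin n → ℝ) : Prop :=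
  (∀ i, 0 ≤ q i + M.mulVec z i) ∧ (∀ i, 0 ≤ z i) ∧ (∑ i, (q i + M.mulVec z i) * z i) = 0

lemma aux_pos {n : ℕ} (A : Matrix (Fin n) (Fin n) ℝ) (hA : IsUnit A)
    (hpos : ∀ i j, 0 < A⁻¹ i j) (x : Fin n → ℝ)
    (hv : ∀ i, 0 ≤ A.mulVec x i) (i₀ : Fin n) (hvi : 0 < A.mulVec x i₀) :
    ∀ i, 0 < x i := by
  have hdet : IsUnit A.det := (Matrix.isUnit_iff_isUnit_det A).mp hA
  have hx : x = A⁻¹.mulVec (A.mulVec x) := by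
    rw [Matrix.mulVec_mulVec, Matrix.nonsing_inv_mul A hdet, Matrix.one_mulVec]
  intro i
  have hxi : x i = ∑ j, A⁻¹ i j * A.mulVec x j := by
    conv_lhs => rw [hx]
    rfl
  rw [hxi]
  refine Finset.sum_pos' (fun j _ => mul_nonneg (hpos i j).le (hv j)) ?_
  exact ⟨i₀, Finset.mem_univ _, mul_pos (hpos i i₀) hvi⟩

theorem stmt2 {n : ℕ} (Mhat Mtil : Matrix (Fin n) (Fin n) ℝ) (qhat qtil zhat ztil : Fin n → ℝ)
    (hM : ∀ i j, Mhat i j ≤ Mtil i j) (hq : ∀ i, qhat i ≤ qtil i)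
    (hZtil : SolvesLCP Mtil qtil ztil) (hZhat : SolvesLCP Mhat qhat zhat)
    (hqeq : qtil = -(Mtil.mulVec ztil))
    (hstrict : ∃ i₀, qhat i₀ < qtil i₀)
    (hinv : (IsUnit Mtil ∧ ∀ i j, 0 < Mtil⁻¹ i j) ∨ (IsUnit Mhat ∧ ∀ i j, 0 < Mhat⁻¹ i j)) :
    ∀ i, ztil i < zhat i := by
  obtain ⟨i₀, hi₀⟩ := hstrict
  have hzhat0 : ∀ i, 0 ≤ zhat i := hZhat.2.1
  have hztil0 : ∀ i, 0 ≤ ztil i := hZtil.2.1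
  have hw : ∀ i, 0 ≤ qhat i + Mhat.mulVec zhat i := hZhat.1
  have hqz : ∀ i, qtil i + Mtil.mulVec ztil i = 0 := by
    intro i
    have := congrFun hqeq i
    simp only [Pi.neg_apply] at this
    linarith
  -- entrywise monotone mulVec comparisons
  have hMz : ∀ i, Mhat.mulVec zhat i ≤ Mtil.mulVec zhat i := by
    intro i
    simp only [Matrix.mulVec, dotProduct]
    exact Finset.sum_le_sum fun j _ => mul_le_mul_of_nonneg_right (hM i j) (hzhat0 j)
  have hMz' : ∀ i, Mhat.mulVec ztil i ≤ Mtil.mulVec ztil i := by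
    intro i
    simp only [Matrix.mulVec, dotProduct]
    exact Finset.sum_le_sum fun j _ => mul_le_mul_of_nonneg_right (hM i j) (hztil0 j)
  have key : ∀ i, ztil i < zhat i → True := fun _ _ => trivial
  have hsub : ∀ (A : Matrix (Fin n) (Fin n) ℝ) i,
      A.mulVec (zhat - ztil) i = A.mulVec zhat i - A.mulVec ztil i := by
    intro A i
    rw [Matrix.mulVec_sub]
    rfl
  have goal : ∀ i, 0 < (zhat - ztil) i := by
    rcases hinv with ⟨hU, hP⟩ | ⟨hU, hP⟩
    · -- use Mtil
      have hv : ∀ i, 0 ≤ Mtil.mulVec (zhat - ztil) i := by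
        intro i
        rw [hsub]
        have h1 : 0 ≤ qhat i + Mhat.mulVec zhat i := hw i
        have := hMz i
        have := hq i
        have := hqz i
        linarith
      have hvi : 0 < Mtil.mulVec (zhat - ztil) i₀ := by
        rw [hsub]
        have h1 : 0 ≤ qhat i₀ + Mhat.mulVec zhat i₀ := hw i₀
        have := hMz i₀
        have := hqz i₀
        linarith
      exact aux_pos Mtil hU hP _ hv i₀ hvi
    · -- use Mhat
      have hv : ∀ i, 0 ≤ Mhat.mulVec (zhat - ztil) i := by
        intro i
        rw [hsub]
        have h1 : 0 ≤ qhat i + Mhat.mulVec zhat i := hw i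
        have := hMz' i
        have := hq i
        have := hqz i
        linarith
      have hvi : 0 < Mhat.mulVec (zhat - ztil) i₀ := by
        rw [hsub]
        have h1 : 0 ≤ qhat i₀ + Mhat.mulVec zhat i₀ := hw i₀
        have := hMz' i₀
        have := hqz i₀
        linarith
      exact aux_pos Mhat hU hP _ hv i₀ hvi
  intro i
  have := goal i
  simpa [sub_pos] using this
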